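/- arXiv:1804.08585 — 3 statements merged into one kernel-verified Lean document; each statement's English description precedes it below -/
import Mathlib

section
/- Let E be an exact category with enough projectives and P a projective cover of E. Then E is cartesian closed if and only if every object X of P is exponentiable in E, i.e. the functor (−) × X : E → E has a right adjoint. -/
open CategoryTheory Limits

namespace ExComp

universe v u

variable {E : Type u} [Category.{v} E]

/-- A regular epimorphism, as a property of a morphism. -/
def RegEpi {A B : E} (f : A ⟶ B) : Prop := Nonempty (RegularEpi f)

/-- An object is (regular) projective if its covariant hom functor sends regular
epimorphisms to surjections. -/
def RegProjective (X : E) : Prop :=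
  ∀ ⦃A B : E⦄ (e : A ⟶ B), RegEpi e → ∀ f : X ⟶ B, ∃ g : X ⟶ A, g ≫ e = f

/-- `E` has enough projectives: every object admits a regular epimorphism from a
projective object. -/
def EnoughRegProjectives (E : Type u) [Category.{v} E] : Prop :=
  ∀ A : E, ∃ (X : E) (p : X ⟶ A), RegProjective X ∧ RegEpi p

/-- An internal equivalence relation: a jointly monic, reflexive, symmetric and
transitive pair of parallel arrows. -/
structure IsEquivRelPair {R X : E} (r₁ r₂ : R ⟶ X) : Prop where
  jointlyMono : ∀ ⦃T : E⦄ (h k : T ⟶ R), h ≫ r₁ = k ≫ r₁ → h ≫ r₂ = k ≫ r₂ → h = k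
  refl : ∃ d : X ⟶ R, d ≫ r₁ = 𝟙 X ∧ d ≫ r₂ = 𝟙 X
  symm : ∃ s : R ⟶ R, s ≫ r₁ = r₂ ∧ s ≫ r₂ = r₁
  trans : ∀ ⦃T : E⦄ (p q : T ⟶ R), p ≫ r₂ = q ≫ r₁ →
    ∃ t : T ⟶ R, t ≫ r₁ = p ≫ r₁ ∧ t ≫ r₂ = q ≫ r₂

/-- An exact category: a finitely complete category where every morphism factors as a
regular epi followed by a mono, regular epis are stable under pullback, and every
internal equivalence relation is effective (it is the kernel pair of the coequaliser
it admits). -/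
structure IsExact (E : Type u) [Category.{v} E] [HasFiniteLimits E] : Prop where
  factor : ∀ ⦃A B : E⦄ (f : A ⟶ B), ∃ (I : E) (e : A ⟶ I) (m : I ⟶ B),
    RegEpi e ∧ Mono m ∧ e ≫ m = f
  stable : ∀ ⦃A B C : E⦄ (f : A ⟶ B) (g : C ⟶ B), RegEpi f → RegEpi (pullback.snd f g)
  effective : ∀ ⦃R X : E⦄ (r₁ r₂ : R ⟶ X), IsEquivRelPair r₁ r₂ →
    ∃ (Q : E) (q : X ⟶ Q) (w : r₁ ≫ q = r₂ ≫ q),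
      Nonempty (IsColimit (Cofork.ofπ q w)) ∧ IsPullback r₁ r₂ q q

/-- A projective cover of `E`: a (full sub)collection of objects, each projective,
such that every object of `E` admits a regular epimorphism from one of them. -/
def IsProjectiveCover (P : Set E) : Prop :=
  (∀ X ∈ P, RegProjective X) ∧ ∀ A : E, ∃ X ∈ P, ∃ p : X ⟶ A, RegEpi p

section FinLim
variable [HasFiniteLimits E]

/-- `X` is internally projective: every arrow `T ⨯ X ⟶ B` lifts along a regular epi
`A ↠ B` after passing to a regular epi `U ↠ T`. -/
def InternallyProjective (X : E) : Prop :=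
  ∀ ⦃T A B : E⦄ (e : A ⟶ B), RegEpi e → ∀ f : T ⨯ X ⟶ B,
    ∃ (U : E) (u : U ⟶ T) (g : U ⨯ X ⟶ A), RegEpi u ∧ g ≫ e = prod.map u (𝟙 X) ≫ f

/-- Cartesian closure, as a property: for every object `X` the functor `(−) ⨯ X` has a
right adjoint. -/
def CartesianClosedP (E : Type u) [Category.{v} E] [HasFiniteLimits E] : Prop :=
  ∀ X : E, (prod.functor.flip.obj X).IsLeftAdjoint

/-- Local cartesian closure, as a property: every slice is cartesian closed. -/
def LocallyCartesianClosedP (E : Type u) [Category.{v} E] [HasFiniteLimits E] : Prop :=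
  ∀ (I : E) (F : Over I), ((prod.functor (C := Over I)).flip.obj F).IsLeftAdjoint

end FinLim

/-! ## Weak products and weak simple products -/

/-- A weak product in `P` of `X` and `Y`: a span through which every span in `P`
factors (not necessarily uniquely). -/
structure IsWeakProduct (P : Set E) {X Y V : E} (p : V ⟶ X) (q : V ⟶ Y) : Prop where
  mem : V ∈ P
  lift : ∀ ⦃V' : E⦄, V' ∈ P → ∀ (p' : V' ⟶ X) (q' : V' ⟶ Y),
    ∃ h : V' ⟶ V, h ≫ p = p' ∧ h ≫ q = q'

/-- An arrow out of a weak product is determined by projections if it coequalises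
every pair of arrows (from an object of `P`) coequalised by both projections. -/
def DeterminedByProjections (P : Set E) {V X Y Z : E} (p : V ⟶ X) (q : V ⟶ Y)
    (f : V ⟶ Z) : Prop :=
  ∀ ⦃V' : E⦄, V' ∈ P → ∀ (h k : V' ⟶ V), h ≫ p = k ≫ p → h ≫ q = k ≫ q → h ≫ f = k ≫ f

/-- A candidate diagram for a weak simple product of a span `J ←f Y →g X`. -/
structure WSPCone (P : Set E) {J Y X : E} (f : Y ⟶ J) (g : Y ⟶ X)
    (W V : E) (w : W ⟶ J) (p : V ⟶ W) (q : V ⟶ X) (e : V ⟶ Y) : Prop where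
  memW : W ∈ P
  wp : IsWeakProduct P p q
  det : DeterminedByProjections P p q e
  comm₁ : p ≫ w = e ≫ f
  comm₂ : q = e ≫ g

/-- A weak simple product: a weakly terminal candidate diagram. -/
structure IsWeakSimpleProduct (P : Set E) {J Y X : E} (f : Y ⟶ J) (g : Y ⟶ X)
    (W V : E) (w : W ⟶ J) (p : V ⟶ W) (q : V ⟶ X) (e : V ⟶ Y) : Prop where
  cone : WSPCone P f g W V w p q e
  lift : ∀ ⦃W' V' : E⦄ (w' : W' ⟶ J) (p' : V' ⟶ W') (q' : V' ⟶ X) (e' : V' ⟶ Y),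
    WSPCone P f g W' V' w' p' q' e' →
    ∃ (α : W' ⟶ W) (β : V' ⟶ V),
      α ≫ w = w' ∧ β ≫ p = p' ≫ α ∧ β ≫ q = q' ∧ β ≫ e = e'

/-- `P` has weak simple products. -/
def HasWeakSimpleProducts (P : Set E) : Prop :=
  ∀ ⦃J Y X : E⦄, J ∈ P → Y ∈ P → X ∈ P → ∀ (f : Y ⟶ J) (g : Y ⟶ X),
    ∃ (W V : E) (w : W ⟶ J) (p : V ⟶ W) (q : V ⟶ X) (e : V ⟶ Y),
      IsWeakSimpleProduct P f g W V w p q e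

/-! ## Pseudo simple products -/

/-- A candidate diagram for a pseudo simple product (no determinacy requirement). -/
structure PSPCone (P : Set E) {J Y X : E} (f : Y ⟶ J) (g : Y ⟶ X)
    (W V : E) (w : W ⟶ J) (p : V ⟶ W) (q : V ⟶ X) (e : V ⟶ Y) : Prop where
  memW : W ∈ P
  wp : IsWeakProduct P p q
  comm₁ : p ≫ w = e ≫ f
  comm₂ : q = e ≫ g

/-- A pseudo simple product: a weakly terminal candidate diagram. -/
structure IsPseudoSimpleProduct (P : Set E) {J Y X : E} (f : Y ⟶ J) (g : Y ⟶ X)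
    (W V : E) (w : W ⟶ J) (p : V ⟶ W) (q : V ⟶ X) (e : V ⟶ Y) : Prop where
  cone : PSPCone P f g W V w p q e
  lift : ∀ ⦃W' V' : E⦄ (w' : W' ⟶ J) (p' : V' ⟶ W') (q' : V' ⟶ X) (e' : V' ⟶ Y),
    PSPCone P f g W' V' w' p' q' e' →
    ∃ (α : W' ⟶ W) (β : V' ⟶ V),
      α ≫ w = w' ∧ β ≫ p = p' ≫ α ∧ β ≫ q = q' ∧ β ≫ e = e'

/-- `P` has pseudo simple products. -/
def HasPseudoSimpleProducts (P : Set E) : Prop :=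
  ∀ ⦃J Y X : E⦄, J ∈ P → Y ∈ P → X ∈ P → ∀ (f : Y ⟶ J) (g : Y ⟶ X),
    ∃ (W V : E) (w : W ⟶ J) (p : V ⟶ W) (q : V ⟶ X) (e : V ⟶ Y),
      IsPseudoSimpleProduct P f g W V w p q e

/-! ## Weak exponentials -/

/-- A candidate diagram for a weak exponential of `X` and `Y`. -/
structure WExpCone (P : Set E) {X Y : E} (W V : E) (p : V ⟶ W) (q : V ⟶ X)
    (e : V ⟶ Y) : Prop where
  memW : W ∈ P
  wp : IsWeakProduct P p q
  det : DeterminedByProjections P p q e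

/-- A weak exponential of `X` and `Y` in `P`. -/
structure IsWeakExponential (P : Set E) {X Y : E} (W V : E) (p : V ⟶ W) (q : V ⟶ X)
    (e : V ⟶ Y) : Prop where
  cone : WExpCone P W V p q e
  lift : ∀ ⦃W' V' : E⦄ (p' : V' ⟶ W') (q' : V' ⟶ X) (e' : V' ⟶ Y),
    WExpCone P W' V' p' q' e' →
    ∃ (α : W' ⟶ W) (β : V' ⟶ V), β ≫ p = p' ≫ α ∧ β ≫ q = q' ∧ β ≫ e = e'

/-- `P` has weak exponentials. -/
def HasWeakExponentials (P : Set E) : Prop :=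
  ∀ ⦃X Y : E⦄, X ∈ P → Y ∈ P →
    ∃ (W V : E) (p : V ⟶ W) (q : V ⟶ X) (e : V ⟶ Y), IsWeakExponential P W V p q e

/-- A quasi exponential of `X` and `B`: the weak universal property of an exponential
restricted to projective sources. -/
def IsQuasiExponential [HasFiniteLimits E] (P : Set E) (X : E) {B : E} (W : E)
    (e : W ⨯ X ⟶ B) : Prop :=
  ∀ ⦃Z : E⦄, Z ∈ P → ∀ f : Z ⨯ X ⟶ B, ∃ g : Z ⟶ W, prod.map g (𝟙 X) ≫ e = f

section FinLim2
variable [HasFiniteLimits E]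

/-! ## Pseudo equivalence relations, equalities and generalised weak (simple) products -/

/-- A pseudo equivalence relation: a pair of parallel arrows whose image in `E` is an
equivalence relation. -/
def IsPseudoEquivRel {Y1 Y0 : E} (y₁ y₂ : Y1 ⟶ Y0) : Prop :=
  ∃ (R : E) (e : Y1 ⟶ R) (m : R ⟶ Y0 ⨯ Y0), RegEpi e ∧ Mono m ∧
    e ≫ m = prod.lift y₁ y₂ ∧ IsEquivRelPair (m ≫ prod.fst) (m ≫ prod.snd)

/-- An equality for a weak limit, relative to the comparison arrow `c : V0 ⟶ L` into
the actual limit: a pseudo equivalence relation `v₁, v₂ : V1 ⇉ V0` in `P` such that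
`c` is a coequaliser of `v₁, v₂` and `V1` regularly covers the kernel pair of `c`. -/
structure IsEqualityFor (P : Set E) {V1 V0 L : E} (c : V0 ⟶ L) (v₁ v₂ : V1 ⟶ V0) :
    Prop where
  mem : V1 ∈ P
  per : IsPseudoEquivRel v₁ v₂
  w : v₁ ≫ c = v₂ ≫ c
  coeq : Nonempty (IsColimit (Cofork.ofπ c w))
  cover : RegEpi (pullback.lift v₁ v₂ w)

/-- An arrow `e : V ⟶ Z0` out of a weak product with projections `p, q` preserves
projections with respect to a pseudo equivalence relation `z₁, z₂ : Z1 ⇉ Z0` if for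
any equality `v₁, v₂ : V1 ⇉ V` for the weak product there is `t : V1 ⟶ Z1` with
`t ≫ zᵢ = vᵢ ≫ e`. -/
def PreservesProjWP (P : Set E) {V X Y Z1 Z0 : E} (p : V ⟶ X) (q : V ⟶ Y)
    (z₁ z₂ : Z1 ⟶ Z0) (e : V ⟶ Z0) : Prop :=
  ∀ ⦃V1 : E⦄ (v₁ v₂ : V1 ⟶ V), IsEqualityFor P (prod.lift p q) v₁ v₂ →
    ∃ t : V1 ⟶ Z1, t ≫ z₁ = v₁ ≫ e ∧ t ≫ z₂ = v₂ ≫ e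

/-- A candidate diagram for a generalised weak simple product of `f` and `g` with
respect to the pseudo equivalence relation `y₁, y₂`. -/
structure GWSPCone (P : Set E) {Y1 Y0 J X : E} (y₁ y₂ : Y1 ⟶ Y0) (f : Y0 ⟶ J)
    (g : Y0 ⟶ X) (W V : E) (w : W ⟶ J) (p : V ⟶ W) (q : V ⟶ X) (e : V ⟶ Y0) :
    Prop where
  memW : W ∈ P
  wp : IsWeakProduct P p q
  pres : PreservesProjWP P p q y₁ y₂ e
  comm₁ : p ≫ w = e ≫ f
  comm₂ : q = e ≫ g

/-- A generalised weak simple product: a weakly terminal candidate diagram. -/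
structure IsGWSP (P : Set E) {Y1 Y0 J X : E} (y₁ y₂ : Y1 ⟶ Y0) (f : Y0 ⟶ J)
    (g : Y0 ⟶ X) (W V : E) (w : W ⟶ J) (p : V ⟶ W) (q : V ⟶ X) (e : V ⟶ Y0) :
    Prop where
  cone : GWSPCone P y₁ y₂ f g W V w p q e
  lift : ∀ ⦃W' V' : E⦄ (w' : W' ⟶ J) (p' : V' ⟶ W') (q' : V' ⟶ X) (e' : V' ⟶ Y0),
    GWSPCone P y₁ y₂ f g W' V' w' p' q' e' →
    ∃ (α : W' ⟶ W) (β : V' ⟶ V),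
      α ≫ w = w' ∧ β ≫ p = p' ≫ α ∧ β ≫ q = q' ∧ β ≫ e = e'

/-- `P` has generalised weak simple products. -/
def HasGWSP (P : Set E) : Prop :=
  ∀ ⦃Y1 Y0 J X : E⦄, Y1 ∈ P → Y0 ∈ P → J ∈ P → X ∈ P →
    ∀ (y₁ y₂ : Y1 ⟶ Y0), IsPseudoEquivRel y₁ y₂ →
    ∀ (f : Y0 ⟶ J) (g : Y0 ⟶ X), y₁ ≫ f = y₂ ≫ f → y₁ ≫ g = y₂ ≫ g →
    ∃ (W V : E) (w : W ⟶ J) (p : V ⟶ W) (q : V ⟶ X) (e : V ⟶ Y0),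
      IsGWSP P y₁ y₂ f g W V w p q e

/-- A candidate diagram for a generalised weak exponential of `X` and `y₁, y₂`. -/
structure GWExpCone (P : Set E) {X Y1 Y0 : E} (y₁ y₂ : Y1 ⟶ Y0)
    (W V : E) (p : V ⟶ W) (q : V ⟶ X) (e : V ⟶ Y0) : Prop where
  memW : W ∈ P
  wp : IsWeakProduct P p q
  pres : PreservesProjWP P p q y₁ y₂ e

/-- A generalised weak exponential of `X` and a pseudo equivalence relation. -/
structure IsGWExp (P : Set E) {X Y1 Y0 : E} (y₁ y₂ : Y1 ⟶ Y0)
    (W V : E) (p : V ⟶ W) (q : V ⟶ X) (e : V ⟶ Y0) : Prop where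
  cone : GWExpCone P y₁ y₂ W V p q e
  lift : ∀ ⦃W' V' : E⦄ (p' : V' ⟶ W') (q' : V' ⟶ X) (e' : V' ⟶ Y0),
    GWExpCone P y₁ y₂ W' V' p' q' e' →
    ∃ (α : W' ⟶ W) (β : V' ⟶ V), β ≫ p = p' ≫ α ∧ β ≫ q = q' ∧ β ≫ e = e'

/-! ## Weak pullbacks and generalised weak dependent products -/

/-- A weak pullback in `P` of the cospan `X →f J ←w W`. -/
structure IsWeakPullback (P : Set E) {X J W V : E} (f : X ⟶ J) (w : W ⟶ J)
    (a : V ⟶ X) (b : V ⟶ W) : Prop where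
  mem : V ∈ P
  comm : a ≫ f = b ≫ w
  lift : ∀ ⦃V' : E⦄, V' ∈ P → ∀ (a' : V' ⟶ X) (b' : V' ⟶ W), a' ≫ f = b' ≫ w →
    ∃ h : V' ⟶ V, h ≫ a = a' ∧ h ≫ b = b'

/-- Preservation of projections for an arrow out of a weak pullback. -/
def PreservesProjWPB (P : Set E) {V X J W Z1 Z0 : E} (f : X ⟶ J) (w : W ⟶ J)
    (a : V ⟶ X) (b : V ⟶ W) (h : a ≫ f = b ≫ w) (z₁ z₂ : Z1 ⟶ Z0) (e : V ⟶ Z0) :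
    Prop :=
  ∀ ⦃V1 : E⦄ (v₁ v₂ : V1 ⟶ V), IsEqualityFor P (pullback.lift a b h) v₁ v₂ →
    ∃ t : V1 ⟶ Z1, t ≫ z₁ = v₁ ≫ e ∧ t ≫ z₂ = v₂ ≫ e

/-- A candidate diagram for a generalised weak dependent product of `g : Y0 ⟶ X`
along `f : X ⟶ J` with respect to `y₁, y₂`. -/
structure GWDPCone (P : Set E) {Y1 Y0 X J : E} (y₁ y₂ : Y1 ⟶ Y0) (g : Y0 ⟶ X)
    (f : X ⟶ J) (W V : E) (w : W ⟶ J) (a : V ⟶ X) (b : V ⟶ W) (e : V ⟶ Y0) :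
    Prop where
  memW : W ∈ P
  comm : a ≫ f = b ≫ w
  wpb : IsWeakPullback P f w a b
  overX : e ≫ g = a
  pres : PreservesProjWPB P f w a b comm y₁ y₂ e

/-- A generalised weak dependent product: a weakly terminal candidate diagram. -/
structure IsGWDP (P : Set E) {Y1 Y0 X J : E} (y₁ y₂ : Y1 ⟶ Y0) (g : Y0 ⟶ X)
    (f : X ⟶ J) (W V : E) (w : W ⟶ J) (a : V ⟶ X) (b : V ⟶ W) (e : V ⟶ Y0) :
    Prop where
  cone : GWDPCone P y₁ y₂ g f W V w a b e
  lift : ∀ ⦃W' V' : E⦄ (w' : W' ⟶ J) (a' : V' ⟶ X) (b' : V' ⟶ W') (e' : V' ⟶ Y0),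
    GWDPCone P y₁ y₂ g f W' V' w' a' b' e' →
    ∃ (α : W' ⟶ W) (β : V' ⟶ V),
      α ≫ w = w' ∧ β ≫ a = a' ∧ β ≫ b = b' ≫ α ∧ β ≫ e = e'

/-- `P` has generalised weak dependent products (i.e. `P` is weakly locally cartesian
closed). -/
def HasGWDP (P : Set E) : Prop :=
  ∀ ⦃Y1 Y0 X J : E⦄, Y1 ∈ P → Y0 ∈ P → X ∈ P → J ∈ P →
    ∀ (y₁ y₂ : Y1 ⟶ Y0), IsPseudoEquivRel y₁ y₂ →
    ∀ (g : Y0 ⟶ X) (f : X ⟶ J), y₁ ≫ g = y₂ ≫ g →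
    ∃ (W V : E) (w : W ⟶ J) (a : V ⟶ X) (b : V ⟶ W) (e : V ⟶ Y0),
      IsGWDP P y₁ y₂ g f W V w a b e

/-! ## The functor `w_X` on subobjects induced by weak simple products -/

/-- The adjunction property of the weak-simple-product operation `w_X` on subobjects:
for every subobject `a : A ↪ J ⨯ X`, every `P`-cover `Y ↠ A`, every weak simple
product `W → J` of the induced span and every image factorisation `W ↠ I ↪ J` of it,
the subobject `I ↪ J` is a value at `a` of a right adjoint to
`(−) ⨯ X : Sub(J) → Sub(J ⨯ X)`. -/
def WAdj (P : Set E) (J X : E) : Prop :=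
  ∀ ⦃A : E⦄ (a : A ⟶ J ⨯ X), Mono a →
  ∀ ⦃Y : E⦄, Y ∈ P → ∀ (c : Y ⟶ A), RegEpi c →
  ∀ ⦃W V : E⦄ (w : W ⟶ J) (p : V ⟶ W) (q : V ⟶ X) (e : V ⟶ Y),
    IsWeakSimpleProduct P (c ≫ a ≫ prod.fst) (c ≫ a ≫ prod.snd) W V w p q e →
  ∀ ⦃I : E⦄ (ew : W ⟶ I) (m : I ⟶ J), RegEpi ew → Mono m → ew ≫ m = w →
  ∀ ⦃B : E⦄ (b : B ⟶ J), Mono b →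
    ((∃ t : B ⨯ X ⟶ A, t ≫ a = prod.map b (𝟙 X)) ↔ ∃ s : B ⟶ I, s ≫ m = b)

/-! ## Weak dependent products (à la Carboni–Rosolini) -/

/-- `P` has weak dependent products: for `f : X ⟶ J` and `g : Y ⟶ X` in `P` there are
`w : W ⟶ J` in `P` and a surjection `Hom_{P/J}(h, w) → Hom_{P/X}(f*(h), g)` natural
in `h ∈ P/J`. -/
def HasWeakDependentProducts (P : Set E) : Prop :=
  ∀ ⦃X J Y : E⦄, X ∈ P → J ∈ P → Y ∈ P → ∀ (f : X ⟶ J) (g : Y ⟶ X),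
    ∃ (W : E) (_ : W ∈ P) (w : W ⟶ J)
      (ε : ∀ ⦃T : E⦄, T ∈ P → ∀ (h : T ⟶ J) (k : T ⟶ W), k ≫ w = h →
        (pullback h f ⟶ Y)),
      (∀ ⦃T : E⦄ (hT : T ∈ P) (h : T ⟶ J) (k : T ⟶ W) (hk : k ≫ w = h),
         ε hT h k hk ≫ g = pullback.snd h f) ∧
      (∀ ⦃T : E⦄ (hT : T ∈ P) (h : T ⟶ J) (d : pullback h f ⟶ Y),
         d ≫ g = pullback.snd h f → ∃ (k : T ⟶ W) (hk : k ≫ w = h), ε hT h k hk = d) ∧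
      (∀ ⦃T' T : E⦄ (hT' : T' ∈ P) (hT : T ∈ P) (u : T' ⟶ T) (h : T ⟶ J) (k : T ⟶ W)
         (hk : k ≫ w = h),
         ε hT' (u ≫ h) (u ≫ k) (by rw [Category.assoc, hk]) =
           pullback.map (u ≫ h) f h f u (𝟙 X) (𝟙 J) (by simp) (by simp) ≫ ε hT h k hk)

end FinLim2

section Aux

variable {E : Type u} [Category.{v} E]

lemma regEpi_epi {A B : E} {f : A ⟶ B} (hf : RegEpi f) : Epi f := by
  obtain ⟨i⟩ := hf
  exact RegularEpi.epi f i

/-- From a regular epi, descend a morphism that coequalises everything the epi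
coequalises. -/
lemma desc_of_regEpi {A B Z : E} {f : A ⟶ B} (hf : RegEpi f) (h : A ⟶ Z)
    (hh : ∀ ⦃Q : E⦄ (g₁ g₂ : Q ⟶ A), g₁ ≫ f = g₂ ≫ f → g₁ ≫ h = g₂ ≫ h) :
    ∃ l : B ⟶ Z, f ≫ l = h := by
  obtain ⟨i⟩ := hf
  obtain ⟨l, hl⟩ := Cofork.IsColimit.desc' i.isColimit h (hh _ _ i.w)
  exact ⟨l, hl⟩

variable [HasFiniteLimits E]

/-- `(𝟙 A) × u` is an epi and admits descent, for `u` a regular epi, in a category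
where regular epis are stable under pullback. -/
lemma prodMap_facts (hE : IsExact E) (A : E) {S T : E} (u : S ⟶ T) (hu : RegEpi u) :
    Epi (prod.map (𝟙 A) u) ∧
      ∀ ⦃Z : E⦄ (h : A ⨯ S ⟶ Z),
        (∀ ⦃Q : E⦄ (g₁ g₂ : Q ⟶ A ⨯ S),
          g₁ ≫ prod.map (𝟙 A) u = g₂ ≫ prod.map (𝟙 A) u → g₁ ≫ h = g₂ ≫ h) →
        ∃ l : A ⨯ T ⟶ Z, prod.map (𝟙 A) u ≫ l = h := by
  have hsnd : RegEpi (pullback.snd u (prod.snd : A ⨯ T ⟶ T)) := hE.stable u prod.snd hu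
  let φ : A ⨯ S ⟶ pullback u (prod.snd : A ⨯ T ⟶ T) :=
    pullback.lift prod.snd (prod.map (𝟙 A) u) (by simp)
  let ψ : pullback u (prod.snd : A ⨯ T ⟶ T) ⟶ A ⨯ S :=
    prod.lift (pullback.snd u prod.snd ≫ prod.fst) (pullback.fst u prod.snd)
  have hφψ : φ ≫ ψ = 𝟙 _ := by
    apply Limits.prod.hom_ext <;> simp [φ, ψ, prod.lift_fst, prod.lift_snd, prod.lift_fst_assoc, prod.lift_snd_assoc, pullback.lift_fst, pullback.lift_snd, pullback.lift_fst_assoc, pullback.lift_snd_assoc]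
  have hψφ : ψ ≫ φ = 𝟙 _ := by
    apply pullback.hom_ext
    · simp [φ, ψ, prod.lift_fst, prod.lift_snd, prod.lift_fst_assoc, prod.lift_snd_assoc, pullback.lift_fst, pullback.lift_snd, pullback.lift_fst_assoc, pullback.lift_snd_assoc]
    · apply Limits.prod.hom_ext
      · simp [φ, ψ, prod.lift_fst, prod.lift_snd, prod.lift_fst_assoc, prod.lift_snd_assoc, pullback.lift_fst, pullback.lift_snd, pullback.lift_fst_assoc, pullback.lift_snd_assoc]
      · simp [φ, ψ, pullback.condition, prod.lift_fst, prod.lift_snd, prod.lift_fst_assoc, prod.lift_snd_assoc, pullback.lift_fst, pullback.lift_snd, pullback.lift_fst_assoc, pullback.lift_snd_assoc]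
  have hfac : φ ≫ pullback.snd u prod.snd = prod.map (𝟙 A) u := pullback.lift_snd _ _ _
  constructor
  · haveI : IsIso φ := ⟨ψ, hφψ, hψφ⟩
    haveI := regEpi_epi hsnd
    rw [← hfac]; exact epi_comp _ _
  · intro Z h hh
    obtain ⟨i⟩ := hsnd
    have hw : (i.left ≫ ψ) ≫ prod.map (𝟙 A) u = (i.right ≫ ψ) ≫ prod.map (𝟙 A) u := by
      rw [← hfac]
      have hc : ψ ≫ φ ≫ pullback.snd u prod.snd = pullback.snd u prod.snd := by
        rw [← Category.assoc, hψφ, Category.id_comp]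
      rw [Category.assoc, Category.assoc, hc]
      exact i.w
    obtain ⟨l, hl⟩ := Cofork.IsColimit.desc' i.isColimit (ψ ≫ h)
      (by simpa using hh _ _ hw)
    have hl' : pullback.snd u prod.snd ≫ l = ψ ≫ h := hl
    refine ⟨l, ?_⟩
    rw [← hfac, Category.assoc, hl', ← Category.assoc, hφψ, Category.id_comp]

end Aux

set_option maxHeartbeats 1600000 in
/-- `E` is cartesian closed iff every object of the projective cover `P`
is exponentiable in `E`. -/
theorem stmt11 {E : Type u} [Category.{v} E] [HasFiniteLimits E]
    (hE : IsExact E) (P : Set E) (hP : IsProjectiveCover P) :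
    CartesianClosedP E ↔ ∀ X ∈ P, (prod.functor.flip.obj X).IsLeftAdjoint := by
  constructor
  · intro h X _
    exact h X
  · intro hexp X
    obtain ⟨-, hcov⟩ := hP
    obtain ⟨P₀, hP₀, p, hp⟩ := hcov X
    obtain ⟨P₁, hP₁, c, hc⟩ := hcov (pullback p p)
    set d₁ : P₁ ⟶ P₀ := c ≫ pullback.fst p p with hd₁def
    set d₂ : P₁ ⟶ P₀ := c ≫ pullback.snd p p with hd₂def
    have hd : d₁ ≫ p = d₂ ≫ p := by
      show (c ≫ pullback.fst p p) ≫ p = (c ≫ pullback.snd p p) ≫ p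
      rw [Category.assoc, Category.assoc, pullback.condition]
    obtain ⟨G₀, ⟨adj₀⟩⟩ := (hexp P₀ hP₀).exists_rightAdjoint
    obtain ⟨G₁, ⟨adj₁⟩⟩ := (hexp P₁ hP₁).exists_rightAdjoint
    -- `h` coequalises everything coequalised by `𝟙 × p`, provided it coequalises
    -- `𝟙 × d₁` and `𝟙 × d₂`.
    have key : ∀ ⦃A Z : E⦄ (h : A ⨯ P₀ ⟶ Z),
        prod.map (𝟙 A) d₁ ≫ h = prod.map (𝟙 A) d₂ ≫ h →
        ∀ ⦃Q : E⦄ (g₁ g₂ : Q ⟶ A ⨯ P₀),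
          g₁ ≫ prod.map (𝟙 A) p = g₂ ≫ prod.map (𝟙 A) p → g₁ ≫ h = g₂ ≫ h := by
      intro A Z h hh Q g₁ g₂ hg
      set F : A ⨯ P₀ ⟶ A ⨯ X := prod.map (𝟙 A) p with hFdef
      have hcondR : prod.map (𝟙 A) (pullback.fst p p) ≫ F =
          prod.map (𝟙 A) (pullback.snd p p) ≫ F := by
        rw [hFdef, prod.map_map, prod.map_map, pullback.condition]
      let φR : A ⨯ pullback p p ⟶ pullback F F :=
        pullback.lift (prod.map (𝟙 A) (pullback.fst p p))
          (prod.map (𝟙 A) (pullback.snd p p)) hcondR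
      -- the two kernel-pair projections of `F`
      have hFfst : F ≫ (prod.fst : A ⨯ X ⟶ A) = prod.fst := by
        rw [hFdef, prod.map_fst, Category.comp_id]
      have hFsnd : F ≫ (prod.snd : A ⨯ X ⟶ X) = prod.snd ≫ p := by
        rw [hFdef, prod.map_snd]
      have hpbc : pullback.fst F F ≫ F = pullback.snd F F ≫ F :=
        pullback.condition
      have hfsteq : pullback.fst F F ≫ prod.fst = pullback.snd F F ≫ prod.fst := by
        calc pullback.fst F F ≫ prod.fst
            = pullback.fst F F ≫ F ≫ prod.fst := by rw [hFfst]
          _ = (pullback.fst F F ≫ F) ≫ prod.fst := by rw [Category.assoc]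
          _ = (pullback.snd F F ≫ F) ≫ prod.fst := by rw [hpbc]
          _ = pullback.snd F F ≫ prod.fst := by rw [Category.assoc, hFfst]
      have hsndeq : (pullback.fst F F ≫ prod.snd) ≫ p =
          (pullback.snd F F ≫ prod.snd) ≫ p := by
        calc (pullback.fst F F ≫ prod.snd) ≫ p
            = pullback.fst F F ≫ F ≫ prod.snd := by rw [hFsnd, Category.assoc]
          _ = (pullback.fst F F ≫ F) ≫ prod.snd := by rw [Category.assoc]
          _ = (pullback.snd F F ≫ F) ≫ prod.snd := by rw [hpbc]
          _ = (pullback.snd F F ≫ prod.snd) ≫ p := by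
              rw [Category.assoc, hFsnd, Category.assoc]
      let ψR : pullback F F ⟶ A ⨯ pullback p p :=
        prod.lift (pullback.fst F F ≫ prod.fst)
          (pullback.lift (pullback.fst F F ≫ prod.snd)
            (pullback.snd F F ≫ prod.snd) hsndeq)
      have hsplit : ψR ≫ φR = 𝟙 _ := by
        apply pullback.hom_ext
        · rw [Category.assoc, Category.id_comp]
          have : φR ≫ pullback.fst F F = prod.map (𝟙 A) (pullback.fst p p) :=
            pullback.lift_fst _ _ _
          rw [this]
          apply Limits.prod.hom_ext
          · simp [ψR, prod.lift_fst, prod.lift_snd, prod.lift_fst_assoc, prod.lift_snd_assoc, pullback.lift_fst, pullback.lift_snd, pullback.lift_fst_assoc, pullback.lift_snd_assoc]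
          · simp [ψR, prod.lift_fst, prod.lift_snd, prod.lift_fst_assoc, prod.lift_snd_assoc, pullback.lift_fst, pullback.lift_snd, pullback.lift_fst_assoc, pullback.lift_snd_assoc]
        · rw [Category.assoc, Category.id_comp]
          have : φR ≫ pullback.snd F F = prod.map (𝟙 A) (pullback.snd p p) :=
            pullback.lift_snd _ _ _
          rw [this]
          apply Limits.prod.hom_ext
          · simp [ψR, hfsteq, prod.lift_fst, prod.lift_snd, prod.lift_fst_assoc, prod.lift_snd_assoc, pullback.lift_fst, pullback.lift_snd, pullback.lift_fst_assoc, pullback.lift_snd_assoc]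
          · simp [ψR, prod.lift_fst, prod.lift_snd, prod.lift_fst_assoc, prod.lift_snd_assoc, pullback.lift_fst, pullback.lift_snd, pullback.lift_fst_assoc, pullback.lift_snd_assoc]
      haveI hφRepi : Epi φR := by
        haveI : IsSplitEpi φR := IsSplitEpi.mk' ⟨ψR, hsplit⟩
        infer_instance
      haveI hcepi : Epi (prod.map (𝟙 A) c) := (prodMap_facts hE A c hc).1
      -- the kernel pair of `F` coequalises `h`
      have hker : pullback.fst F F ≫ h = pullback.snd F F ≫ h := by
        have he' : Epi (prod.map (𝟙 A) c ≫ φR) := epi_comp _ _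
        refine (cancel_epi (prod.map (𝟙 A) c ≫ φR)).1 ?_
        have h₁ : (prod.map (𝟙 A) c ≫ φR) ≫ pullback.fst F F = prod.map (𝟙 A) d₁ := by
          have : φR ≫ pullback.fst F F = prod.map (𝟙 A) (pullback.fst p p) :=
            pullback.lift_fst _ _ _
          rw [Category.assoc, this, prod.map_map, Category.comp_id, hd₁def]
        have h₂ : (prod.map (𝟙 A) c ≫ φR) ≫ pullback.snd F F = prod.map (𝟙 A) d₂ := by
          have : φR ≫ pullback.snd F F = prod.map (𝟙 A) (pullback.snd p p) :=
            pullback.lift_snd _ _ _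
          rw [Category.assoc, this, prod.map_map, Category.comp_id, hd₂def]
        rw [← Category.assoc, ← Category.assoc, h₁, h₂, hh]
      have hk : pullback.lift g₁ g₂ hg ≫ pullback.fst F F = g₁ := pullback.lift_fst _ _ _
      have hk' : pullback.lift g₁ g₂ hg ≫ pullback.snd F F = g₂ := pullback.lift_snd _ _ _
      calc g₁ ≫ h = (pullback.lift g₁ g₂ hg ≫ pullback.fst F F) ≫ h := by rw [hk]
        _ = pullback.lift g₁ g₂ hg ≫ pullback.fst F F ≫ h := by rw [Category.assoc]
        _ = pullback.lift g₁ g₂ hg ≫ pullback.snd F F ≫ h := by rw [hker]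
        _ = (pullback.lift g₁ g₂ hg ≫ pullback.snd F F) ≫ h := by rw [Category.assoc]
        _ = g₂ ≫ h := by rw [hk']
    -- the comparison maps between the exponentials of `P₀` and `P₁`
    let u₁ : ∀ Z : E, G₀.obj Z ⟶ G₁.obj Z := fun Z =>
      (adj₁.homEquiv (G₀.obj Z) Z) (prod.map (𝟙 (G₀.obj Z)) d₁ ≫ adj₀.counit.app Z)
    let u₂ : ∀ Z : E, G₀.obj Z ⟶ G₁.obj Z := fun Z =>
      (adj₁.homEquiv (G₀.obj Z) Z) (prod.map (𝟙 (G₀.obj Z)) d₂ ≫ adj₀.counit.app Z)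
    have nat_u : ∀ (A Z : E) (g : A ⟶ G₀.obj Z) (d : P₁ ⟶ P₀),
        g ≫ (adj₁.homEquiv (G₀.obj Z) Z) (prod.map (𝟙 (G₀.obj Z)) d ≫ adj₀.counit.app Z)
          = (adj₁.homEquiv A Z) (prod.map (𝟙 A) d ≫ (adj₀.homEquiv A Z).symm g) := by
      intro A Z g d
      rw [← Adjunction.homEquiv_naturality_left]
      congr 1
      rw [adj₀.homEquiv_counit]
      show prod.map g (𝟙 P₁) ≫ prod.map (𝟙 (G₀.obj Z)) d ≫ adj₀.counit.app Z =
        prod.map (𝟙 A) d ≫ prod.map g (𝟙 P₀) ≫ adj₀.counit.app Z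
      erw [← Category.assoc, ← Category.assoc, prod.map_map, prod.map_map]
      simp
    -- the candidate exponential of `X`
    have hequal : ∀ ⦃A Z : E⦄ (f : A ⨯ X ⟶ Z),
        ((adj₀.homEquiv A Z) (prod.map (𝟙 A) p ≫ f)) ≫ u₁ Z =
          ((adj₀.homEquiv A Z) (prod.map (𝟙 A) p ≫ f)) ≫ u₂ Z := by
      intro A Z f
      rw [nat_u, nat_u, Equiv.symm_apply_apply]
      congr 1
      erw [← Category.assoc, ← Category.assoc, prod.map_map, prod.map_map,
        Category.comp_id, hd]
    have descend : ∀ (A Z : E) (g : A ⟶ equalizer (u₁ Z) (u₂ Z)),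
        ∃ l : A ⨯ X ⟶ Z, prod.map (𝟙 A) p ≫ l =
          (adj₀.homEquiv A Z).symm (g ≫ equalizer.ι (u₁ Z) (u₂ Z)) := by
      intro A Z g
      set h := (adj₀.homEquiv A Z).symm (g ≫ equalizer.ι (u₁ Z) (u₂ Z)) with hhdef
      have hh : prod.map (𝟙 A) d₁ ≫ h = prod.map (𝟙 A) d₂ ≫ h := by
        apply (adj₁.homEquiv A Z).injective
        have e₁ := nat_u A Z (g ≫ equalizer.ι (u₁ Z) (u₂ Z)) d₁
        have e₂ := nat_u A Z (g ≫ equalizer.ι (u₁ Z) (u₂ Z)) d₂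
        erw [hhdef, ← e₁, ← e₂]
        show (g ≫ equalizer.ι (u₁ Z) (u₂ Z)) ≫ u₁ Z =
          (g ≫ equalizer.ι (u₁ Z) (u₂ Z)) ≫ u₂ Z
        rw [Category.assoc, Category.assoc, equalizer.condition]
      exact (prodMap_facts hE A p hp).2 h (key h hh)
    -- build the hom-set equivalences
    let eqv : ∀ (A Z : E),
        ((prod.functor.flip.obj X).obj A ⟶ Z) ≃ (A ⟶ equalizer (u₁ Z) (u₂ Z)) :=
      fun A Z =>
      { toFun := fun f =>
          equalizer.lift ((adj₀.homEquiv A Z) (prod.map (𝟙 A) p ≫ f)) (hequal f)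
        invFun := fun g => Classical.choose (descend A Z g)
        left_inv := by
          intro f
          haveI := (prodMap_facts hE A p hp).1
          apply (cancel_epi (prod.map (𝟙 A) p)).1
          erw [Classical.choose_spec (descend A Z _)]
          rw [equalizer.lift_ι, Equiv.symm_apply_apply]
          rfl
        right_inv := by
          intro g
          apply equalizer.hom_ext
          erw [equalizer.lift_ι, Classical.choose_spec (descend A Z g),
            Equiv.apply_symm_apply] }
    have he : ∀ (A' A Z : E) (f : A' ⟶ A) (h : (prod.functor.flip.obj X).obj A ⟶ Z),
        eqv A' Z ((prod.functor.flip.obj X).map f ≫ h) = f ≫ eqv A Z h := by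
      intro A' A Z f h
      apply equalizer.hom_ext
      show equalizer.lift _ _ ≫ _ = (f ≫ equalizer.lift _ _) ≫ _
      rw [equalizer.lift_ι, Category.assoc, equalizer.lift_ι,
        ← Adjunction.homEquiv_naturality_left]
      congr 1
      show prod.map (𝟙 A') p ≫ prod.map f (𝟙 X) ≫ h =
        prod.map f (𝟙 P₀) ≫ prod.map (𝟙 A) p ≫ h
      erw [← Category.assoc, ← Category.assoc, prod.map_map, prod.map_map]
      simp
    exact ⟨⟨_, ⟨Adjunction.adjunctionOfEquivRight eqv he⟩⟩⟩

end ExComp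
end

section
/- Let E be an exact category with enough projectives, P a projective cover of E, and X an object of P that is exponentiable in E (the functor (−) × X has a right adjoint (−)^X). The following are equivalent: (1) X is internally projective; (2) for every object B of E and every P-cover Y ↠ B, the induced morphism Y^X → B^X is a regular epimorphism; (3) for every object B of E there exists a P-cover Y ↠ B such that the induced morphism Y^X → B^X is a regular epimorphism. -/
open CategoryTheory Limits

namespace ExComp

universe v u

variable {E : Type u} [Category.{v} E]

section Aux

variable {E : Type u} [Category.{v} E]

lemma regEpi_comp_isIso {A B C : E} (e : A ⟶ B) (m : B ⟶ C)
    (he : RegEpi e) (hm : IsIso m) : RegEpi (e ≫ m) := by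
  obtain ⟨r⟩ := he
  refine ⟨⟨r.W, r.left, r.right,
    by rw [← Category.assoc, r.w, Category.assoc], ?_⟩⟩
  refine Cofork.IsColimit.mk' _ fun s => ?_
  have hd : e ≫ r.isColimit.desc s = s.π := by
    simpa using Cofork.IsColimit.π_desc (t := s) r.isColimit
  refine ⟨inv m ≫ r.isColimit.desc s, ?_, ?_⟩
  · simp only [Cofork.π_ofπ, Category.assoc, IsIso.hom_inv_id_assoc]
    exact hd
  · intro m' hm'
    have : m ≫ m' = r.isColimit.desc s := by
      apply Cofork.IsColimit.hom_ext r.isColimit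
      simp only [Cofork.π_ofπ] at hm' ⊢
      change e ≫ (m ≫ m') = e ≫ _
      rw [hd, ← Category.assoc]
      simpa using hm'
    rw [← this, IsIso.inv_hom_id_assoc]

lemma regEpi_of_comp_regEpi [HasFiniteLimits E] (hE : IsExact E)
    {U C D : E} (v : U ⟶ C) (w : C ⟶ D) (h : RegEpi (v ≫ w)) : RegEpi w := by
  obtain ⟨I, e, m, he, hm, hem⟩ := hE.factor w
  obtain ⟨r⟩ := h
  haveI : RegularEpi (v ≫ w) := r
  haveI : IsRegularEpi (v ≫ w) := isRegularEpi_of_regularEpi r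
  haveI : Mono m := hm
  haveI : HasLiftingProperty (v ≫ w) m := StrongEpi.llp m
  have sq : CommSq (v ≫ e) (v ≫ w) m (𝟙 D) :=
    ⟨by rw [Category.assoc, hem, Category.comp_id]⟩
  have hlm : sq.lift ≫ m = 𝟙 D := sq.fac_right
  have hml : m ≫ sq.lift = 𝟙 I := by
    have : (m ≫ sq.lift) ≫ m = 𝟙 I ≫ m := by
      rw [Category.assoc, hlm, Category.comp_id, Category.id_comp]
    exact Mono.right_cancellation _ _ this
  haveI : IsIso m := ⟨sq.lift, hml, hlm⟩
  rw [← hem]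
  exact regEpi_comp_isIso e m he ‹IsIso m›

end Aux

/-- For `X ∈ P` exponentiable in `E` (with right adjoint `expF` to
`(−) ⨯ X`), the following are equivalent: (1) `X` is internally projective;
(2) `(−)^X` sends every `P`-cover to a regular epi; (3) every object admits a
`P`-cover sent by `(−)^X` to a regular epi. -/
theorem stmt12 {E : Type u} [Category.{v} E] [HasFiniteLimits E]
    (hE : IsExact E) (P : Set E) (hP : IsProjectiveCover P)
    (X : E) (hX : X ∈ P) (expF : E ⥤ E) (adj : prod.functor.flip.obj X ⊣ expF) :
    (InternallyProjective X ↔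
       ∀ ⦃B Y : E⦄, Y ∈ P → ∀ (c : Y ⟶ B), RegEpi c → RegEpi (expF.map c)) ∧
    (InternallyProjective X ↔
       ∀ B : E, ∃ Y ∈ P, ∃ c : Y ⟶ B, RegEpi c ∧ RegEpi (expF.map c)) := by
  have F := prod.functor.flip.obj X
  -- (1) → (2)
  have h12 : InternallyProjective X →
      ∀ ⦃B Y : E⦄, Y ∈ P → ∀ (c : Y ⟶ B), RegEpi c → RegEpi (expF.map c) := by
    intro h1 B Y _ c hc
    obtain ⟨U, u, g, hu, hg⟩ := h1 c hc (adj.counit.app B)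
    have key : adj.homEquiv U Y g ≫ expF.map c = u := by
      have h1' : adj.homEquiv U B (g ≫ c) = adj.homEquiv U Y g ≫ expF.map c :=
        adj.homEquiv_naturality_right _ _
      have h2' : adj.homEquiv U B
          ((prod.functor.flip.obj X).map u ≫ adj.counit.app B) =
          u ≫ adj.homEquiv (expF.obj B) B (adj.counit.app B) :=
        adj.homEquiv_naturality_left _ _
      have h3' : adj.homEquiv (expF.obj B) B (adj.counit.app B) =
          𝟙 (expF.obj B) := by
        have hs : (adj.homEquiv (expF.obj B) B).symm (𝟙 (expF.obj B)) =
            adj.counit.app B := by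
          rw [Adjunction.homEquiv_counit, CategoryTheory.Functor.map_id, Category.id_comp]
        rw [← hs, Equiv.apply_symm_apply]
      have hmap : (prod.functor.flip.obj X).map u = prod.map u (𝟙 X) := by
        simp [prod.functor]
      refine h1'.symm.trans ?_
      erw [hg, ← hmap, h2', h3', Category.comp_id]
    rw [← key] at hu
    exact regEpi_of_comp_regEpi hE _ _ hu
  -- (2) → (3)
  have h23 : (∀ ⦃B Y : E⦄, Y ∈ P → ∀ (c : Y ⟶ B), RegEpi c → RegEpi (expF.map c)) →
      ∀ B : E, ∃ Y ∈ P, ∃ c : Y ⟶ B, RegEpi c ∧ RegEpi (expF.map c) := by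
    intro h2 B
    obtain ⟨Y, hY, c, hc⟩ := hP.2 B
    exact ⟨Y, hY, c, hc, h2 hY c hc⟩
  -- (3) → (1)
  have h31 : (∀ B : E, ∃ Y ∈ P, ∃ c : Y ⟶ B, RegEpi c ∧ RegEpi (expF.map c)) →
      InternallyProjective X := by
    intro h3 T A B e he f
    obtain ⟨Y, hY, c, hc, hec⟩ := h3 B
    obtain ⟨h, hh⟩ := hP.1 Y hY e he c
    set fhat := adj.homEquiv T B f with hfhat
    refine ⟨pullback (expF.map c) fhat, pullback.snd _ _,
      (adj.homEquiv _ Y).symm (pullback.fst _ _) ≫ h, hE.stable _ _ hec, ?_⟩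
    refine (Category.assoc _ _ _).trans ?_
    rw [hh]
    apply (adj.homEquiv _ B).injective
    have l1 : adj.homEquiv _ B ((adj.homEquiv _ Y).symm (pullback.fst (expF.map c) fhat) ≫ c) =
        pullback.fst (expF.map c) fhat ≫ expF.map c := by
      rw [adj.homEquiv_naturality_right, Equiv.apply_symm_apply]
    have hmap : prod.map (pullback.snd (expF.map c) fhat) (𝟙 X) =
        (prod.functor.flip.obj X).map (pullback.snd (expF.map c) fhat) := by
      simp [prod.functor]
    have l2 : adj.homEquiv _ B (prod.map (pullback.snd (expF.map c) fhat) (𝟙 X) ≫ f) =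
        pullback.snd (expF.map c) fhat ≫ fhat := by
      rw [hmap]
      exact adj.homEquiv_naturality_left _ _
    exact l1.trans (pullback.condition.trans l2.symm)
  exact ⟨⟨fun h1 => h12 h1, fun h2 => h31 (h23 h2)⟩,
    ⟨fun h1 => h23 (h12 h1), fun h3 => h31 h3⟩⟩


end ExComp
end

section
/- Let E be an exact category with enough projectives and P a projective cover of E. If E is cartesian closed, then P has generalised weak simple products: for every pseudo equivalence relation y1, y2 : Y1 ⇉ Y0 in P and every span J ←f Y0 →g X in P with f y1 = f y2 and g y1 = g y2, a generalised weak simple product of f and g with respect to y1, y2 exists. -/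
open CategoryTheory Limits

namespace ExComp

universe v u

variable {E : Type u} [Category.{v} E]

section AuxStmt14
variable {E : Type u} [Category.{v} E]

lemma epi_of_regEpi {A B : E} {f : A ⟶ B} (h : RegEpi f) : Epi f := by
  obtain ⟨i⟩ := h
  exact @RegularEpi.epi _ _ _ _ f i

/-- If some regular epi factors through `f`, then `f` is a regular epi. -/
lemma regEpi_of_comp [HasFiniteLimits E] (hE : IsExact E) {Z A B : E} {z : Z ⟶ B}
    (hz : RegEpi z) {h : Z ⟶ A} {f : A ⟶ B} (hf : h ≫ f = z) : RegEpi f := by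
  obtain ⟨I, e, m, he, hm, hem⟩ := hE.factor f
  obtain ⟨rz⟩ := hz
  haveI : Epi z := @RegularEpi.epi _ _ _ _ z rz
  haveI : Mono m := hm
  have h1 : rz.left ≫ h ≫ e = rz.right ≫ h ≫ e := by
    rw [← cancel_mono m]
    simp only [Category.assoc, hem, hf]
    exact rz.w
  set u := Cofork.IsColimit.desc rz.isColimit (h ≫ e) h1 with hu
  have hzu : z ≫ u = h ≫ e := by
    have := Cofork.IsColimit.π_desc' rz.isColimit (h ≫ e) h1
    simpa using this
  have hum : u ≫ m = 𝟙 B := by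
    rw [← cancel_epi z, ← Category.assoc, hzu, Category.assoc, hem, hf,
      Category.comp_id]
  have hmu : m ≫ u = 𝟙 I := by
    rw [← cancel_mono m, Category.assoc, hum, Category.comp_id, Category.id_comp]
  have : IsIso m := ⟨u, hmu, hum⟩
  rw [← hem]
  exact regEpi_comp_isIso e m he this

/-- The kernel pair of any morphism is an internal equivalence relation. -/
lemma kernelPair_isEquivRelPair [HasFiniteLimits E] {A B : E} (f : A ⟶ B) :
    IsEquivRelPair (pullback.fst f f) (pullback.snd f f) where
  jointlyMono _ h k h1 h2 := pullback.hom_ext h1 h2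
  refl := ⟨pullback.lift (𝟙 _) (𝟙 _) rfl, by rw [pullback.lift_fst], by rw [pullback.lift_snd]⟩
  symm := ⟨pullback.lift (pullback.snd f f) (pullback.fst f f) pullback.condition.symm,
    by rw [pullback.lift_fst], by rw [pullback.lift_snd]⟩
  trans _ p q hpq := by
    have hcond : (p ≫ pullback.fst f f) ≫ f = (q ≫ pullback.snd f f) ≫ f := by
      rw [Category.assoc, Category.assoc, pullback.condition, ← Category.assoc, hpq,
        Category.assoc, pullback.condition]
    exact ⟨pullback.lift _ _ hcond, by rw [pullback.lift_fst], by rw [pullback.lift_snd]⟩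

/-- Cartesian closure gives exponentials with their (strict) universal property,
phrased without mentioning functors. -/
lemma exists_exponential [HasFiniteLimits E] (hcc : CartesianClosedP E) (X B : E) :
    ∃ (RB : E) (ε : RB ⨯ X ⟶ B),
      ∀ (T : E) (φ : T ⨯ X ⟶ B), ∃! l : T ⟶ RB, prod.map l (𝟙 X) ≫ ε = φ := by
  haveI := hcc X
  obtain ⟨R, ⟨adj⟩⟩ :=
    Functor.IsLeftAdjoint.exists_rightAdjoint (left := prod.functor.flip.obj X)
  refine ⟨R.obj B, adj.counit.app B, fun T φ => ?_⟩
  refine ⟨(adj.homEquiv T B) φ, ?_, ?_⟩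
  · have h := (adj.homEquiv T B).symm_apply_apply φ
    rw [Adjunction.homEquiv_counit] at h
    exact h
  · intro l' hl'
    have h' : (adj.homEquiv T B).symm l' = φ := by
      rw [Adjunction.homEquiv_counit]
      exact hl'
    rw [← h', Equiv.apply_symm_apply]

end AuxStmt14

/-- If `E` is cartesian closed, then `P` has generalised weak simple
products. -/
theorem stmt14 {E : Type u} [Category.{v} E] [HasFiniteLimits E]
    (hE : IsExact E) (P : Set E) (hP : IsProjectiveCover P)
    (hcc : CartesianClosedP E) :
    HasGWSP P := by
  intro Y1 Y0 J X hY1 hY0 hJ hX y₁ y₂ hper f g hf hg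
  -- unpack the pseudo equivalence relation and form the quotient
  obtain ⟨RY, eY, mY, heY, hmY, hfact, hrel⟩ := hper
  haveI : Epi eY := epi_of_regEpi heY
  obtain ⟨Q, qY, wq, ⟨hqcolim⟩, hqpb⟩ := hE.effective (mY ≫ prod.fst) (mY ≫ prod.snd) hrel
  have hqYreg : RegEpi qY := ⟨⟨RY, _, _, wq, hqcolim⟩⟩
  haveI : Epi qY := epi_of_regEpi hqYreg
  have hey1 : eY ≫ mY ≫ prod.fst = y₁ := by
    rw [← Category.assoc, hfact, prod.lift_fst]
  have hey2 : eY ≫ mY ≫ prod.snd = y₂ := by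
    rw [← Category.assoc, hfact, prod.lift_snd]
  have hyq : y₁ ≫ qY = y₂ ≫ qY := by
    rw [← hey1, ← hey2]
    simp only [Category.assoc]
    rw [← Category.assoc mY prod.fst qY, ← Category.assoc mY prod.snd qY, wq]
  -- descend f and g to the quotient
  have hrf : (mY ≫ prod.fst) ≫ f = (mY ≫ prod.snd) ≫ f := by
    have h := hf
    rw [← hey1, ← hey2] at h
    simp only [Category.assoc] at h ⊢
    exact (cancel_epi eY).1 h
  have hrg : (mY ≫ prod.fst) ≫ g = (mY ≫ prod.snd) ≫ g := by
    have h := hg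
    rw [← hey1, ← hey2] at h
    simp only [Category.assoc] at h ⊢
    exact (cancel_epi eY).1 h
  obtain ⟨fbar, hfbar_def⟩ : ∃ fbar : Q ⟶ J, fbar = Cofork.IsColimit.desc hqcolim f hrf :=
    ⟨_, rfl⟩
  have hfbar : qY ≫ fbar = f := by
    rw [hfbar_def]
    simpa using Cofork.IsColimit.π_desc' hqcolim f hrf
  obtain ⟨gbar, hgbar_def⟩ : ∃ gbar : Q ⟶ X, gbar = Cofork.IsColimit.desc hqcolim g hrg :=
    ⟨_, rfl⟩
  have hgbar : qY ≫ gbar = g := by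
    rw [hgbar_def]
    simpa using Cofork.IsColimit.π_desc' hqcolim g hrg
  -- exponentials
  obtain ⟨RQ, εQ, hεQ⟩ := exists_exponential hcc X Q
  obtain ⟨RXJ, εXJ, hεXJ⟩ := exists_exponential hcc X (X ⨯ J)
  -- the object of sections
  obtain ⟨χ₁, hχ₁⟩ : ∃ χ₁ : (J ⨯ RQ) ⨯ X ⟶ X ⨯ J,
      χ₁ = prod.lift (prod.map prod.snd (𝟙 X) ≫ εQ ≫ gbar)
        (prod.map prod.snd (𝟙 X) ≫ εQ ≫ fbar) := ⟨_, rfl⟩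
  obtain ⟨χ₂, hχ₂⟩ : ∃ χ₂ : (J ⨯ RQ) ⨯ X ⟶ X ⨯ J,
      χ₂ = prod.lift prod.snd (prod.fst ≫ prod.fst) := ⟨_, rfl⟩
  obtain ⟨u₁, hu₁, -⟩ := hεXJ (J ⨯ RQ) χ₁
  obtain ⟨u₂, hu₂, -⟩ := hεXJ (J ⨯ RQ) χ₂
  have transfer : ∀ {T : E} (ψ : T ⟶ J ⨯ RQ),
      prod.map ψ (𝟙 X) ≫ χ₁ = prod.map ψ (𝟙 X) ≫ χ₂ → ψ ≫ u₁ = ψ ≫ u₂ := by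
    intro T ψ hψ
    obtain ⟨l, -, hluniq⟩ := hεXJ T (prod.map ψ (𝟙 X) ≫ χ₁)
    have hsplit : ∀ (u : (J ⨯ RQ) ⟶ RXJ),
        prod.map (ψ ≫ u) (𝟙 X) = prod.map ψ (𝟙 X) ≫ prod.map u (𝟙 X) := by
      intro u
      rw [prod.map_map, Category.comp_id]
    have e1 : ψ ≫ u₁ = l := hluniq _ (by
      show prod.map (ψ ≫ u₁) (𝟙 X) ≫ εXJ = prod.map ψ (𝟙 X) ≫ χ₁
      rw [hsplit, Category.assoc, hu₁])
    have e2 : ψ ≫ u₂ = l := hluniq _ (by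
      show prod.map (ψ ≫ u₂) (𝟙 X) ≫ εXJ = prod.map ψ (𝟙 X) ≫ χ₁
      rw [hsplit, Category.assoc, hu₂, hψ])
    rw [e1, e2]
  obtain ⟨s, hs_def⟩ : ∃ s : equalizer u₁ u₂ ⟶ J ⨯ RQ, s = equalizer.ι u₁ u₂ := ⟨_, rfl⟩
  have hs_eq : prod.map s (𝟙 X) ≫ χ₁ = prod.map s (𝟙 X) ≫ χ₂ := by
    rw [← hu₁, ← hu₂, ← Category.assoc, ← Category.assoc, prod.map_map, prod.map_map,
      hs_def, equalizer.condition]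
  -- cover the object of sections
  obtain ⟨W, hW, cW, hcW⟩ := hP.2 (equalizer u₁ u₂)
  obtain ⟨w, hw_def⟩ : ∃ w : W ⟶ J, w = cW ≫ s ≫ prod.fst := ⟨_, rfl⟩
  obtain ⟨evW, hevW_def⟩ : ∃ evW : W ⨯ X ⟶ Q,
      evW = prod.map (cW ≫ s ≫ prod.snd) (𝟙 X) ≫ εQ := ⟨_, rfl⟩
  have hevsplit : prod.map (cW ≫ s ≫ prod.snd) (𝟙 X)
      = prod.map cW (𝟙 X) ≫ prod.map s (𝟙 X) ≫ prod.map prod.snd (𝟙 X) := by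
    rw [prod.map_map, prod.map_map, Category.comp_id, Category.comp_id]
  have hevg : evW ≫ gbar = (prod.snd : W ⨯ X ⟶ X) := by
    have h := hs_eq =≫ prod.fst
    simp only [hχ₁, hχ₂, Category.assoc, prod.lift_fst] at h
    rw [hevW_def, hevsplit]
    simp only [Category.assoc]
    rw [h, prod.map_snd, Category.comp_id, prod.map_snd, Category.comp_id]
  have hevf : evW ≫ fbar = (prod.fst : W ⨯ X ⟶ W) ≫ w := by
    have h := hs_eq =≫ prod.snd
    simp only [hχ₁, hχ₂, Category.assoc, prod.lift_snd] at h
    rw [hevW_def, hevsplit]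
    simp only [Category.assoc]
    rw [h, hw_def]
    simp only [prod.map_fst_assoc, prod.map_fst, Category.assoc]
  -- the total space V
  have hpbreg : RegEpi (pullback.snd qY evW) := hE.stable qY evW hqYreg
  obtain ⟨V, hV, cV, hcV⟩ := hP.2 (pullback qY evW)
  obtain ⟨p, hp_def⟩ : ∃ p : V ⟶ W, p = cV ≫ pullback.snd qY evW ≫ prod.fst := ⟨_, rfl⟩
  obtain ⟨q, hq_def⟩ : ∃ q : V ⟶ X, q = cV ≫ pullback.snd qY evW ≫ prod.snd := ⟨_, rfl⟩
  obtain ⟨e, he_def⟩ : ∃ e : V ⟶ Y0, e = cV ≫ pullback.fst qY evW := ⟨_, rfl⟩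
  have hlpq : prod.lift p q = cV ≫ pullback.snd qY evW := by
    apply Limits.prod.hom_ext
    · rw [prod.lift_fst, hp_def, Category.assoc]
    · rw [prod.lift_snd, hq_def, Category.assoc]
  have heq : e ≫ qY = prod.lift p q ≫ evW := by
    rw [hlpq, he_def, Category.assoc, Category.assoc, pullback.condition]
  refine ⟨W, V, w, p, q, e, ⟨⟨hW, ?_, ?_, ?_, ?_⟩, ?_⟩⟩
  · -- weak product
    refine ⟨hV, fun V'' hV'' p'' q'' => ?_⟩
    obtain ⟨h₁, hh₁⟩ := hP.1 _ hV'' _ hpbreg (prod.lift p'' q'')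
    obtain ⟨h₂, hh₂⟩ := hP.1 _ hV'' _ hcV h₁
    refine ⟨h₂, ?_, ?_⟩
    · rw [hp_def, ← Category.assoc, hh₂, ← Category.assoc, hh₁, prod.lift_fst]
    · rw [hq_def, ← Category.assoc, hh₂, ← Category.assoc, hh₁, prod.lift_snd]
  · -- preserves projections
    intro V1 v₁ v₂ hEq
    have h1 : (v₁ ≫ e) ≫ qY = (v₂ ≫ e) ≫ qY := by
      rw [Category.assoc, Category.assoc, heq, ← Category.assoc, ← Category.assoc, hEq.w]
    obtain ⟨t, ht⟩ := hP.1 _ hEq.mem _ heY (hqpb.lift (v₁ ≫ e) (v₂ ≫ e) h1)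
    refine ⟨t, ?_, ?_⟩
    · rw [← hey1, ← Category.assoc, ht, hqpb.lift_fst]
    · rw [← hey2, ← Category.assoc, ht, hqpb.lift_snd]
  · -- comm₁
    rw [← hfbar, ← Category.assoc, heq, Category.assoc, hevf, ← Category.assoc,
      prod.lift_fst]
  · -- comm₂
    rw [← hgbar, ← Category.assoc, heq, Category.assoc, hevg, prod.lift_snd]
  · -- weak terminality
    intro W' V' w' p' q' e' hcone'
    have hV' := hcone'.wp.mem
    -- prod.lift p' q' is a regular epi
    obtain ⟨Z, hZ, z, hz⟩ := hP.2 (W' ⨯ X)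
    obtain ⟨h, hh1, hh2⟩ := hcone'.wp.lift hZ (z ≫ prod.fst) (z ≫ prod.snd)
    have hhc : h ≫ prod.lift p' q' = z := by
      apply Limits.prod.hom_ext
      · rw [Category.assoc, prod.lift_fst]; exact hh1
      · rw [Category.assoc, prod.lift_snd]; exact hh2
    have hc'reg : RegEpi (prod.lift p' q') := regEpi_of_comp hE hz hhc
    obtain ⟨c', hc'⟩ : ∃ c' : V' ⟶ W' ⨯ X, c' = prod.lift p' q' := ⟨_, rfl⟩
    rw [← hc'] at hc'reg hhc
    haveI : Epi c' := epi_of_regEpi hc'reg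
    -- an equality for the weak product (p', q')
    obtain ⟨V1, hV1, cK, hcK⟩ := hP.2 (pullback c' c')
    haveI : Epi cK := epi_of_regEpi hcK
    obtain ⟨v₁, hv₁⟩ : ∃ v₁ : V1 ⟶ V', v₁ = cK ≫ pullback.fst c' c' := ⟨_, rfl⟩
    obtain ⟨v₂, hv₂⟩ : ∃ v₂ : V1 ⟶ V', v₂ = cK ≫ pullback.snd c' c' := ⟨_, rfl⟩
    have wv : v₁ ≫ c' = v₂ ≫ c' := by
      rw [hv₁, hv₂, Category.assoc, Category.assoc, pullback.condition]
    obtain ⟨rc⟩ := hc'reg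
    have hdesc0 : ∀ (sc : Cofork v₁ v₂), rc.left ≫ sc.π = rc.right ≫ sc.π := by
      intro sc
      have hks : pullback.fst c' c' ≫ sc.π = pullback.snd c' c' ≫ sc.π := by
        rw [← cancel_epi cK, ← Category.assoc, ← Category.assoc, ← hv₁, ← hv₂]
        exact sc.condition
      calc rc.left ≫ sc.π
          = (pullback.lift rc.left rc.right rc.w ≫ pullback.fst c' c') ≫ sc.π := by
            rw [pullback.lift_fst]
        _ = (pullback.lift rc.left rc.right rc.w ≫ pullback.snd c' c') ≫ sc.π := by
            rw [Category.assoc, Category.assoc, hks]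
        _ = rc.right ≫ sc.π := by rw [pullback.lift_snd]
    have hcolim : IsColimit (Cofork.ofπ c' wv) := by
      refine Cofork.IsColimit.mk _
        (fun sc => Cofork.IsColimit.desc rc.isColimit sc.π (hdesc0 sc))
        (fun sc => ?_) (fun sc m hm => ?_)
      · simpa using Cofork.IsColimit.π_desc' rc.isColimit sc.π (hdesc0 sc)
      · have h2 : c' ≫ Cofork.IsColimit.desc rc.isColimit sc.π (hdesc0 sc) = sc.π := by
          simpa using Cofork.IsColimit.π_desc' rc.isColimit sc.π (hdesc0 sc)
        simp only [Cofork.π_ofπ] at hm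
        rw [← cancel_epi c', hm, h2]
    have hEq : IsEqualityFor P c' v₁ v₂ := by
      refine ⟨hV1, ?_, wv, ⟨hcolim⟩, ?_⟩
      · refine ⟨pullback c' c', cK,
          prod.lift (pullback.fst c' c') (pullback.snd c' c'), hcK, ?_, ?_, ?_⟩
        · refine ⟨fun {T} a b hab => ?_⟩
          apply pullback.hom_ext
          · have h3 := hab =≫ prod.fst
            rw [Category.assoc, Category.assoc, prod.lift_fst] at h3
            exact h3
          · have h3 := hab =≫ prod.snd
            rw [Category.assoc, Category.assoc, prod.lift_snd] at h3
            exact h3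
        · apply Limits.prod.hom_ext
          · rw [Category.assoc, prod.lift_fst, prod.lift_fst, hv₁]
          · rw [Category.assoc, prod.lift_snd, prod.lift_snd, hv₂]
        · have h4 := kernelPair_isEquivRelPair c'
          rw [prod.lift_fst, prod.lift_snd]
          exact h4
      · have h5 : pullback.lift v₁ v₂ wv = cK := by
          apply pullback.hom_ext
          · rw [pullback.lift_fst]
            exact hv₁
          · rw [pullback.lift_snd]
            exact hv₂
        rw [h5]
        exact hcK
    rw [hc'] at hEq
    obtain ⟨t', ht1, ht2⟩ := hcone'.pres v₁ v₂ hEq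
    -- descend e' ≫ qY along c'
    have hdescφ : v₁ ≫ e' ≫ qY = v₂ ≫ e' ≫ qY := by
      rw [← Category.assoc, ← Category.assoc, ← ht1, ← ht2, Category.assoc,
        Category.assoc, hyq]
    obtain ⟨φ, hφdef⟩ : ∃ φ : W' ⨯ X ⟶ Q,
        φ = Cofork.IsColimit.desc hcolim (e' ≫ qY) hdescφ := ⟨_, rfl⟩
    have hφ : c' ≫ φ = e' ≫ qY := by
      rw [hφdef]
      simpa using Cofork.IsColimit.π_desc' hcolim (e' ≫ qY) hdescφ
    have hφg : φ ≫ gbar = (prod.snd : W' ⨯ X ⟶ X) := by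
      rw [← cancel_epi c', ← Category.assoc, hφ, Category.assoc, hgbar,
        ← hcone'.comm₂, hc', prod.lift_snd]
    have hφf : φ ≫ fbar = (prod.fst : W' ⨯ X ⟶ W') ≫ w' := by
      rw [← cancel_epi c', ← Category.assoc, hφ, Category.assoc, hfbar,
        ← hcone'.comm₁, hc', ← Category.assoc, prod.lift_fst]
    -- transpose φ and land in the object of sections
    obtain ⟨φh, hφh, -⟩ := hεQ W' φ
    obtain ⟨ψ, hψdef⟩ : ∃ ψ : W' ⟶ J ⨯ RQ, ψ = prod.lift w' φh := ⟨_, rfl⟩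
    have hsplitψ : prod.map ψ (𝟙 X) ≫ prod.map prod.snd (𝟙 X) = prod.map φh (𝟙 X) := by
      rw [prod.map_map, Category.comp_id, hψdef, prod.lift_snd]
    have hψu : ψ ≫ u₁ = ψ ≫ u₂ := by
      apply transfer
      apply Limits.prod.hom_ext
      · simp only [hχ₁, hχ₂, Category.assoc, prod.lift_fst]
        rw [← Category.assoc, hsplitψ, ← Category.assoc, hφh, hφg, prod.map_snd,
          Category.comp_id]
      · simp only [hχ₁, hχ₂, Category.assoc, prod.lift_snd]
        rw [← Category.assoc, hsplitψ, ← Category.assoc, hφh, hφf, ← Category.assoc,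
          prod.map_fst, Category.assoc, hψdef, prod.lift_fst]
    have hσ : equalizer.lift ψ hψu ≫ s = ψ := by
      rw [hs_def]
      exact equalizer.lift_ι ψ hψu
    obtain ⟨α, hα⟩ := hP.1 _ hcone'.memW cW hcW (equalizer.lift ψ hψu)
    have hαw : α ≫ w = w' := by
      rw [hw_def, ← Category.assoc, hα, ← Category.assoc, hσ, hψdef, prod.lift_fst]
    -- construct β
    have hsplitα : prod.map α (𝟙 X) ≫ prod.map (cW ≫ s ≫ prod.snd) (𝟙 X)
        = prod.map φh (𝟙 X) := by
      rw [prod.map_map, Category.comp_id, ← Category.assoc, hα, ← Category.assoc, hσ,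
        hψdef, prod.lift_snd]
    have hm' : e' ≫ qY = (c' ≫ prod.map α (𝟙 X)) ≫ evW := by
      rw [hevW_def]
      simp only [Category.assoc]
      rw [← Category.assoc (prod.map α (𝟙 X)), hsplitα, hφh, hφ]
    obtain ⟨β, hβ⟩ := hP.1 _ hV' cV hcV (pullback.lift e' (c' ≫ prod.map α (𝟙 X)) hm')
    refine ⟨α, β, hαw, ?_, ?_, ?_⟩
    · rw [hp_def, ← Category.assoc, hβ, ← Category.assoc, pullback.lift_snd,
        Category.assoc, prod.map_fst, hc', ← Category.assoc, prod.lift_fst]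
    · rw [hq_def, ← Category.assoc, hβ, ← Category.assoc, pullback.lift_snd,
        Category.assoc, prod.map_snd, Category.comp_id, hc', prod.lift_snd]
    · rw [he_def, ← Category.assoc, hβ, pullback.lift_fst]

end ExComp
end
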